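/- arXiv:2103.07652 — 5 statements merged into one kernel-verified Lean document; each statement's English description precedes it below -/
import Mathlib

section
/- If T = [[A, B],[C, D]] is a 2×2 operator matrix acting on H₁ ⊕ H₂, then w(T) ≤ (1/2)( w(A) + w(D) + √( (w(A) − w(D))² + (‖B‖ + ‖C‖)² ) ). -/
noncomputable def numRad {H : Type*} [NormedAddCommGroup H] [InnerProductSpace ℂ H]
    (T : H →L[ℂ] H) : ℝ :=
  sSup {r : ℝ | ∃ x : H, ‖x‖ = 1 ∧ r = ‖(inner ℂ (T x) x : ℂ)‖}

lemma numRad_nonneg' {H : Type*} [NormedAddCommGroup H] [InnerProductSpace ℂ H]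
    (T : H →L[ℂ] H) : 0 ≤ numRad T := by
  apply Real.sSup_nonneg
  rintro r ⟨x, -, rfl⟩
  positivity

lemma numRad_bddAbove' {H : Type*} [NormedAddCommGroup H] [InnerProductSpace ℂ H]
    (T : H →L[ℂ] H) :
    BddAbove {r : ℝ | ∃ x : H, ‖x‖ = 1 ∧ r = ‖(inner ℂ (T x) x : ℂ)‖} := by
  refine ⟨‖T‖, ?_⟩
  rintro r ⟨x, hx, rfl⟩
  calc ‖(inner ℂ (T x) x : ℂ)‖ ≤ ‖T x‖ * ‖x‖ := norm_inner_le_norm _ _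
    _ ≤ ‖T‖ * ‖x‖ * ‖x‖ := by gcongr; exact T.le_opNorm x
    _ = ‖T‖ := by rw [hx]; ring

lemma inner_le_numRad' {H : Type*} [NormedAddCommGroup H] [InnerProductSpace ℂ H]
    (T : H →L[ℂ] H) (x : H) :
    ‖(inner ℂ (T x) x : ℂ)‖ ≤ numRad T * ‖x‖ ^ 2 := by
  rcases eq_or_ne x 0 with rfl | hx
  · simp
  · have hn : (0:ℝ) < ‖x‖ := norm_pos_iff.mpr hx
    set u : H := ‖x‖⁻¹ • x with hu
    have hun : ‖u‖ = 1 := by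
      rw [hu, norm_smul]
      simp [abs_of_pos hn, inv_mul_cancel₀ hn.ne']
    have hmem : ‖(inner ℂ (T u) u : ℂ)‖ ≤ numRad T :=
      le_csSup (numRad_bddAbove' T) ⟨u, hun, rfl⟩
    have hx' : x = (‖x‖ : ℂ) • u := by
      rw [Complex.coe_smul, hu, smul_smul, mul_inv_cancel₀ hn.ne', one_smul]
    have hkey : ‖(inner ℂ (T x) x : ℂ)‖ = ‖(‖x‖ : ℂ)‖^2 * ‖(inner ℂ (T u) u : ℂ)‖ := by
      conv_lhs => rw [hx']
      rw [map_smul, inner_smul_left, inner_smul_right]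
      simp [norm_mul, mul_comm]
      ring
    have hc : ‖((‖x‖ : ℂ))‖ = ‖x‖ := by simp
    rw [hkey, hc, mul_comm]
    gcongr

lemma key_ineq' (a d k s t : ℝ) (hst : s^2 + t^2 = 1) :
    a*s^2 + d*t^2 + k*s*t ≤ (1/2) * (a + d + Real.sqrt ((a-d)^2 + k^2)) := by
  set S := Real.sqrt ((a-d)^2 + k^2) with hS
  have hS0 : 0 ≤ S := Real.sqrt_nonneg _
  have hS2 : S^2 = (a-d)^2 + k^2 := Real.sq_sqrt (by positivity)
  set P := (a-d)*(s^2-t^2) + 2*k*s*t with hPdef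
  have hid : S^2 - P^2 = ((a-d)*(2*s*t) - k*(s^2-t^2))^2 := by
    rw [hS2, hPdef]
    linear_combination (-((a-d)^2+k^2) * (1 + s^2 + t^2)) * hst
  have hP2 : P^2 ≤ S^2 := by nlinarith [hid, sq_nonneg ((a-d)*(2*s*t) - k*(s^2-t^2))]
  have hP : P ≤ S := (le_abs_self P).trans (by
    rw [← Real.sqrt_sq_eq_abs, ← Real.sqrt_sq hS0]
    exact Real.sqrt_le_sqrt hP2)
  have expand : a*s^2 + d*t^2 + k*s*t = (1/2)*(a + d + P) := by
    rw [hPdef]; linear_combination ((a+d)/2) * hst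
  rw [expand]; linarith

theorem numRad_block_2x2
    {H₁ H₂ : Type*} [NormedAddCommGroup H₁] [InnerProductSpace ℂ H₁] [CompleteSpace H₁]
    [NormedAddCommGroup H₂] [InnerProductSpace ℂ H₂] [CompleteSpace H₂]
    (A : H₁ →L[ℂ] H₁) (B : H₂ →L[ℂ] H₁) (C : H₁ →L[ℂ] H₂) (D : H₂ →L[ℂ] H₂)
    (T : WithLp 2 (H₁ × H₂) →L[ℂ] WithLp 2 (H₁ × H₂))
    (hT : ∀ z : WithLp 2 (H₁ × H₂),
      T z = (WithLp.equiv 2 (H₁ × H₂)).symm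
        (A ((WithLp.equiv 2 (H₁ × H₂)) z).1 + B ((WithLp.equiv 2 (H₁ × H₂)) z).2,
         C ((WithLp.equiv 2 (H₁ × H₂)) z).1 + D ((WithLp.equiv 2 (H₁ × H₂)) z).2)) :
    numRad T ≤ (1 / 2 : ℝ) * (numRad A + numRad D +
      Real.sqrt ((numRad A - numRad D) ^ 2 + (‖B‖ + ‖C‖) ^ 2)) := by
  have ha0 : 0 ≤ numRad A := numRad_nonneg' A
  have hd0 : 0 ≤ numRad D := numRad_nonneg' D
  have hRHS0 : 0 ≤ (1 / 2 : ℝ) * (numRad A + numRad D +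
      Real.sqrt ((numRad A - numRad D) ^ 2 + (‖B‖ + ‖C‖) ^ 2)) := by
    have := Real.sqrt_nonneg ((numRad A - numRad D) ^ 2 + (‖B‖ + ‖C‖) ^ 2)
    linarith
  apply Real.sSup_le _ hRHS0
  rintro r ⟨z, hz, rfl⟩
  set x : H₁ := ((WithLp.equiv 2 (H₁ × H₂)) z).1 with hx
  set y : H₂ := ((WithLp.equiv 2 (H₁ × H₂)) z).2 with hy
  have hxy : ‖x‖^2 + ‖y‖^2 = 1 := by
    have h := WithLp.prod_norm_sq_eq_of_L2 z
    rw [hz] at h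
    simpa [hx, hy] using h.symm
  have hinner : (inner ℂ (T z) z : ℂ) =
      inner ℂ (A x) x + inner ℂ (B y) x + (inner ℂ (C x) y + inner ℂ (D y) y) := by
    rw [hT z, WithLp.prod_inner_apply]
    simp [inner_add_left, hx, hy]
  have h1 : ‖(inner ℂ (A x) x : ℂ)‖ ≤ numRad A * ‖x‖^2 := inner_le_numRad' A x
  have h4 : ‖(inner ℂ (D y) y : ℂ)‖ ≤ numRad D * ‖y‖^2 := inner_le_numRad' D y
  have h2 : ‖(inner ℂ (B y) x : ℂ)‖ ≤ ‖B‖ * ‖y‖ * ‖x‖ :=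
    (norm_inner_le_norm _ _).trans (by gcongr; exact B.le_opNorm y)
  have h3 : ‖(inner ℂ (C x) y : ℂ)‖ ≤ ‖C‖ * ‖x‖ * ‖y‖ :=
    (norm_inner_le_norm _ _).trans (by gcongr; exact C.le_opNorm x)
  have hbound : ‖(inner ℂ (T z) z : ℂ)‖ ≤
      numRad A * ‖x‖^2 + numRad D * ‖y‖^2 + (‖B‖ + ‖C‖) * ‖x‖ * ‖y‖ := by
    rw [hinner]
    calc ‖(inner ℂ (A x) x + inner ℂ (B y) x + (inner ℂ (C x) y + inner ℂ (D y) y) : ℂ)‖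
        ≤ ‖(inner ℂ (A x) x + inner ℂ (B y) x : ℂ)‖ + ‖(inner ℂ (C x) y + inner ℂ (D y) y : ℂ)‖ :=
          norm_add_le _ _
      _ ≤ (‖(inner ℂ (A x) x : ℂ)‖ + ‖(inner ℂ (B y) x : ℂ)‖) +
          (‖(inner ℂ (C x) y : ℂ)‖ + ‖(inner ℂ (D y) y : ℂ)‖) := by
          gcongr <;> exact norm_add_le _ _
      _ ≤ (numRad A * ‖x‖^2 + ‖B‖ * ‖y‖ * ‖x‖) + (‖C‖ * ‖x‖ * ‖y‖ + numRad D * ‖y‖^2) := by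
          gcongr
      _ = numRad A * ‖x‖^2 + numRad D * ‖y‖^2 + (‖B‖ + ‖C‖) * ‖x‖ * ‖y‖ := by ring
  calc ‖(inner ℂ (T z) z : ℂ)‖
      ≤ numRad A * ‖x‖^2 + numRad D * ‖y‖^2 + (‖B‖ + ‖C‖) * ‖x‖ * ‖y‖ := hbound
    _ ≤ (1/2) * (numRad A + numRad D +
        Real.sqrt ((numRad A - numRad D)^2 + (‖B‖ + ‖C‖)^2)) :=
        key_ineq' (numRad A) (numRad D) (‖B‖ + ‖C‖) ‖x‖ ‖y‖ hxy
end

section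
/- For any n×n complex matrix S = [s_{kj}], the numerical radius of S is at most the numerical radius of the entrywise absolute value matrix: w(S) ≤ w([|s_{kj}|]), and moreover w([|s_{kj}|]) equals (1/2)·r([|s_{kj}|] + [|s_{kj}|]ᵀ), the spectral radius of the symmetrization. -/
open scoped Matrix

/-- Numerical radius of a square complex matrix, viewed as an operator on Euclidean space. -/
noncomputable def numRadM {n : ℕ} (M : Matrix (Fin n) (Fin n) ℂ) : ℝ :=
  numRad (Matrix.toEuclideanCLM (𝕜 := ℂ) M)

/-- Spectral radius of a square complex matrix. -/
noncomputable def specRadM {n : ℕ} (M : Matrix (Fin n) (Fin n) ℂ) : ℝ :=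
  sSup {r : ℝ | ∃ μ ∈ spectrum ℂ M, r = ‖μ‖}

section Aux

open scoped ComplexConjugate

noncomputable def cvec {n : ℕ} (t : Fin n → ℝ) : EuclideanSpace ℂ (Fin n) :=
  (WithLp.equiv 2 _).symm fun i => (t i : ℂ)

@[simp] lemma cvec_apply {n : ℕ} (t : Fin n → ℝ) (i : Fin n) : cvec t i = (t i : ℂ) := rfl

lemma eclm_apply {n : ℕ} (M : Matrix (Fin n) (Fin n) ℂ) (x : EuclideanSpace ℂ (Fin n)) (k : Fin n) :
    (Matrix.toEuclideanCLM (𝕜 := ℂ) M x) k = ∑ j, M k j * x j := by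
  show (M.mulVec x) k = _
  simp [Matrix.mulVec, dotProduct]

lemma inner_eclm {n : ℕ} (M : Matrix (Fin n) (Fin n) ℂ) (x : EuclideanSpace ℂ (Fin n)) :
    (inner ℂ (Matrix.toEuclideanCLM (𝕜 := ℂ) M x) x : ℂ)
      = ∑ k, ∑ j, conj (M k j * x j) * x k := by
  rw [PiLp.inner_apply]
  refine Finset.sum_congr rfl fun k _ => ?_
  rw [RCLike.inner_apply, eclm_apply, map_sum, Finset.mul_sum]
  exact Finset.sum_congr rfl fun j _ => mul_comm _ _

lemma key_bound {n : ℕ} (M : Matrix (Fin n) (Fin n) ℂ) (x : EuclideanSpace ℂ (Fin n)) :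
    ‖(inner ℂ (Matrix.toEuclideanCLM (𝕜 := ℂ) M x) x : ℂ)‖
      ≤ ∑ k, ∑ j, ‖M k j‖ * (‖x j‖ * ‖x k‖) := by
  rw [inner_eclm]
  refine (norm_sum_le _ _).trans (Finset.sum_le_sum fun k _ => ?_)
  refine (norm_sum_le _ _).trans (Finset.sum_le_sum fun j _ => ?_)
  rw [norm_mul, RCLike.norm_conj, norm_mul]
  simp
  ring_nf
  exact le_refl _

lemma inner_eclm_real {n : ℕ} (p : Fin n → Fin n → ℝ) (t : Fin n → ℝ) :
    (inner ℂ (Matrix.toEuclideanCLM (𝕜 := ℂ) (Matrix.of fun k j => (p k j : ℂ)) (cvec t)) (cvec t) : ℂ)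
      = ((∑ k, ∑ j, p k j * t j * t k : ℝ) : ℂ) := by
  rw [inner_eclm]
  push_cast
  refine Finset.sum_congr rfl fun k _ => Finset.sum_congr rfl fun j _ => ?_
  simp only [Matrix.of_apply, cvec_apply, ← Complex.ofReal_mul, Complex.conj_ofReal]

lemma norm_cvec {n : ℕ} (t : Fin n → ℝ) : ‖cvec t‖ = Real.sqrt (∑ i, (t i)^2) := by
  rw [EuclideanSpace.norm_eq]
  congr 1
  refine Finset.sum_congr rfl fun i _ => ?_
  rw [cvec_apply, Complex.norm_real, Real.norm_eq_abs, sq_abs]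

lemma specRadM_eq_norm' {n : ℕ} [NeZero n] (B : Matrix (Fin n) (Fin n) ℂ) (hB : Bᴴ = B) :
    specRadM B = ‖Matrix.toEuclideanCLM (𝕜 := ℂ) B‖ ∧
      ∃ μ ∈ spectrum ℂ B, ‖μ‖ = ‖Matrix.toEuclideanCLM (𝕜 := ℂ) B‖ := by
  haveI : Nontrivial (EuclideanSpace ℂ (Fin n)) := by
    refine ⟨EuclideanSpace.single 0 1, 0, fun h => one_ne_zero (α := ℝ) ?_⟩
    have := congrArg norm h
    rwa [EuclideanSpace.norm_single, norm_one, norm_zero] at this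
  set T := Matrix.toEuclideanCLM (𝕜 := ℂ) B with hT
  have hTsa : IsSelfAdjoint T := by
    rw [IsSelfAdjoint, hT, ← map_star]
    exact congrArg _ (by rw [Matrix.star_eq_conjTranspose, hB])
  have hspec : spectrum ℂ B = spectrum ℂ T :=
    (AlgEquiv.spectrum_eq (Matrix.toEuclideanCLM (𝕜 := ℂ) (n := Fin n)) B).symm
  obtain ⟨z, hz, hznorm⟩ := spectrum.exists_nnnorm_eq_spectralRadius T
  have hzn : ‖z‖ = ‖T‖ := by
    have h2 := hznorm.trans hTsa.spectralRadius_eq_nnnorm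
    have h3 : ‖z‖₊ = ‖T‖₊ := by exact_mod_cast h2
    calc ‖z‖ = (‖z‖₊ : ℝ) := rfl
      _ = (‖T‖₊ : ℝ) := by rw [h3]
      _ = ‖T‖ := rfl
  have hub : ∀ r ∈ {r : ℝ | ∃ μ ∈ spectrum ℂ B, r = ‖μ‖}, r ≤ ‖T‖ := by
    rintro r ⟨μ, hμ, rfl⟩
    exact spectrum.norm_le_norm_of_mem (hspec ▸ hμ)
  have hmemz : z ∈ spectrum ℂ B := hspec ▸ hz
  refine ⟨le_antisymm (Real.sSup_le hub (norm_nonneg _)) ?_, z, hmemz, by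
    exact hzn⟩
  have hmem : ‖T‖ ∈ {r : ℝ | ∃ μ ∈ spectrum ℂ B, r = ‖μ‖} :=
    ⟨z, hmemz, by rw [hzn]⟩
  exact le_csSup ⟨‖T‖, hub⟩ hmem

lemma eigvec_of_spec {n : ℕ} (B : Matrix (Fin n) (Fin n) ℂ) (μ : ℂ) (hμ : μ ∈ spectrum ℂ B) :
    ∃ v : Fin n → ℂ, v ≠ 0 ∧ B.mulVec v = μ • v := by
  have h1 : μ ∈ spectrum ℂ (Matrix.toLin' B) := by
    have h := AlgEquiv.spectrum_eq (Matrix.toLinAlgEquiv' (R := ℂ) (n := Fin n)) B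
    rw [show Matrix.toLinAlgEquiv' (R := ℂ) B = Matrix.toLin' B from rfl] at h
    rwa [h]
  have h2 : Module.End.HasEigenvalue (Matrix.toLin' B) μ :=
    Module.End.hasEigenvalue_iff_mem_spectrum.mpr h1
  obtain ⟨v, hv⟩ := h2.exists_hasEigenvector
  refine ⟨v, hv.2, ?_⟩
  simpa [Matrix.toLin'_apply] using hv.apply_eq_smul

lemma numRadM_zero (M : Matrix (Fin 0) (Fin 0) ℂ) : numRadM M = 0 := by
  haveI : Subsingleton (EuclideanSpace ℂ (Fin 0)) := ⟨fun a b => by ext i; exact i.elim0⟩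
  have hset : {r : ℝ | ∃ x : EuclideanSpace ℂ (Fin 0), ‖x‖ = 1 ∧
      r = ‖(inner ℂ ((Matrix.toEuclideanCLM (𝕜 := ℂ) M) x) x : ℂ)‖} = ∅ := by
    ext r
    simp only [Set.mem_setOf_eq, Set.mem_empty_iff_false, iff_false]
    rintro ⟨x, hx, -⟩
    rw [Subsingleton.elim x 0, norm_zero] at hx
    exact one_ne_zero hx.symm
  rw [numRadM, numRad, hset, Real.sSup_empty]

lemma specRadM_zero (M : Matrix (Fin 0) (Fin 0) ℂ) : specRadM M = 0 := by
  haveI : Subsingleton (Matrix (Fin 0) (Fin 0) ℂ) := ⟨fun a b => by ext i; exact i.elim0⟩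
  have hspec : spectrum ℂ M = ∅ := by
    ext μ
    simp only [Set.mem_empty_iff_false, iff_false]
    intro hμ
    exact (spectrum.mem_iff.mp hμ) (isUnit_of_subsingleton _)
  have hset : {r : ℝ | ∃ μ ∈ spectrum ℂ M, r = ‖μ‖} = ∅ := by
    rw [hspec]; simp
  rw [specRadM, hset, Real.sSup_empty]

end Aux

theorem numRad_le_numRad_abs_entries {n : ℕ} (S : Matrix (Fin n) (Fin n) ℂ) :
    numRadM S ≤ numRadM (Matrix.of fun k j => ((‖S k j‖ : ℝ) : ℂ)) ∧
    numRadM (Matrix.of fun k j => ((‖S k j‖ : ℝ) : ℂ)) =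
      (1 / 2 : ℝ) * specRadM ((Matrix.of fun k j => ((‖S k j‖ : ℝ) : ℂ)) +
        (Matrix.of fun k j => ((‖S k j‖ : ℝ) : ℂ))ᵀ) := by
  rcases Nat.eq_zero_or_pos n with hn | hn
  · subst hn
    rw [numRadM_zero, numRadM_zero, specRadM_zero]
    exact ⟨le_refl 0, by ring⟩
  haveI : NeZero n := ⟨hn.ne'⟩
  set A : Matrix (Fin n) (Fin n) ℂ := Matrix.of fun k j => ((‖S k j‖ : ℝ) : ℂ) with hA
  have hAapp : ∀ k j, A k j = ((‖S k j‖ : ℝ) : ℂ) := fun k j => rfl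
  have ha0 : ∀ k j, (0:ℝ) ≤ ‖S k j‖ := fun k j => norm_nonneg _
  have hBmat : A + Aᵀ
      = Matrix.of fun k j => ((‖S k j‖ + ‖S j k‖ : ℝ) : ℂ) := by
    ext k j
    simp only [Matrix.add_apply, Matrix.transpose_apply, hAapp, Matrix.of_apply]
    push_cast
    ring
  have hBherm : (A + Aᵀ)ᴴ = A + Aᵀ := by
    rw [hBmat]
    ext k j
    simp only [Matrix.conjTranspose_apply, Matrix.of_apply, RCLike.star_def, Complex.conj_ofReal]
    push_cast
    ring
  set ρ := ‖Matrix.toEuclideanCLM (𝕜 := ℂ) (A + Aᵀ)‖ with hρdef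
  have hρ0 : (0:ℝ) ≤ ρ := norm_nonneg _
  obtain ⟨hspecρ, μ0, hμ0mem, hμ0abs⟩ := specRadM_eq_norm' (A + Aᵀ) hBherm
  -- doubling identity
  have hbb : ∀ t : Fin n → ℝ,
      (∑ k, ∑ j, (‖S k j‖ + ‖S j k‖) * t j * t k)
        = 2 * ∑ k, ∑ j, ‖S k j‖ * t j * t k := by
    intro t
    have hswap : (∑ k, ∑ j, ‖S j k‖ * t j * t k)
        = ∑ k, ∑ j, ‖S k j‖ * t j * t k := by
      rw [Finset.sum_comm]
      exact Finset.sum_congr rfl fun k _ => Finset.sum_congr rfl fun j _ => by ring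
    have h1 : ∀ k, ∑ j, (‖S k j‖ + ‖S j k‖) * t j * t k
        = (∑ j, ‖S k j‖ * t j * t k) + ∑ j, ‖S j k‖ * t j * t k := by
      intro k
      rw [← Finset.sum_add_distrib]
      exact Finset.sum_congr rfl fun j _ => by ring
    rw [Finset.sum_congr rfl fun k _ => h1 k, Finset.sum_add_distrib, hswap]
    ring
  -- upper bound for the quadratic form
  have hQub : ∀ t : Fin n → ℝ, (∀ i, 0 ≤ t i) → (∑ i, (t i)^2) = 1 →
      (∑ k, ∑ j, ‖S k j‖ * t j * t k) ≤ ρ / 2 := by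
    intro t ht0 ht1
    have hy : ‖cvec t‖ = 1 := by rw [norm_cvec, ht1, Real.sqrt_one]
    have hv : (inner ℂ (Matrix.toEuclideanCLM (𝕜 := ℂ) (A + Aᵀ) (cvec t)) (cvec t) : ℂ)
        = ((∑ k, ∑ j, (‖S k j‖ + ‖S j k‖) * t j * t k : ℝ) : ℂ) := by
      rw [hBmat]
      exact inner_eclm_real (fun k j => ‖S k j‖ + ‖S j k‖) t
    have h2 := norm_inner_le_norm (𝕜 := ℂ)
      (Matrix.toEuclideanCLM (𝕜 := ℂ) (A + Aᵀ) (cvec t)) (cvec t)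
    rw [hv, hy, mul_one] at h2
    have h3 : ‖Matrix.toEuclideanCLM (𝕜 := ℂ) (A + Aᵀ) (cvec t)‖ ≤ ρ := by
      have := (Matrix.toEuclideanCLM (𝕜 := ℂ) (A + Aᵀ)).le_opNorm (cvec t)
      rwa [hy, mul_one] at this
    have h4 : (∑ k, ∑ j, (‖S k j‖ + ‖S j k‖) * t j * t k)
        ≤ ‖((∑ k, ∑ j, (‖S k j‖ + ‖S j k‖) * t j * t k : ℝ) : ℂ)‖ := by
      rw [Complex.norm_real, Real.norm_eq_abs]
      exact le_abs_self _
    have h5 := h4.trans (h2.trans h3)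
    rw [hbb t] at h5
    linarith
  -- value of the form as an inner product against A
  have hmem : ∀ t : Fin n → ℝ, (∀ i, 0 ≤ t i) →
      ‖(inner ℂ (Matrix.toEuclideanCLM (𝕜 := ℂ) A (cvec t)) (cvec t) : ℂ)‖
        = ∑ k, ∑ j, ‖S k j‖ * t j * t k := by
    intro t ht0
    have hv : (inner ℂ (Matrix.toEuclideanCLM (𝕜 := ℂ) A (cvec t)) (cvec t) : ℂ)
        = ((∑ k, ∑ j, ‖S k j‖ * t j * t k : ℝ) : ℂ) :=
      inner_eclm_real (fun k j => ‖S k j‖) t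
    rw [hv, Complex.norm_real, Real.norm_eq_abs, abs_of_nonneg]
    exact Finset.sum_nonneg fun k _ => Finset.sum_nonneg fun j _ =>
      mul_nonneg (mul_nonneg (ha0 k j) (ht0 j)) (ht0 k)
  -- unit vectors give unit coefficient vectors
  have hxt : ∀ x : EuclideanSpace ℂ (Fin n), ‖x‖ = 1 →
      (∑ i, (‖x i‖)^2) = 1 := by
    intro x hx
    have h1 : ‖x‖ = Real.sqrt (∑ i, (‖x i‖)^2) := by
      simp only [EuclideanSpace.norm_eq]
    rw [hx] at h1
    exact Real.sqrt_eq_one.mp h1.symm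
  -- generic key bound
  have hkb : ∀ (M : Matrix (Fin n) (Fin n) ℂ),
      (∀ k j, ‖M k j‖ = ‖S k j‖) →
      ∀ x : EuclideanSpace ℂ (Fin n),
      ‖(inner ℂ (Matrix.toEuclideanCLM (𝕜 := ℂ) M x) x : ℂ)‖
        ≤ ∑ k, ∑ j, ‖S k j‖ * ‖x j‖ * ‖x k‖ := by
    intro M hM x
    refine (key_bound M x).trans_eq ?_
    exact Finset.sum_congr rfl fun k _ => Finset.sum_congr rfl fun j _ => by rw [hM]; ring
  have habsA : ∀ k j, ‖A k j‖ = ‖S k j‖ := by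
    intro k j
    rw [hAapp, Complex.norm_real, norm_norm]
  -- the set of numerical values of A
  have hnumA : numRadM A = sSup {r : ℝ | ∃ x : EuclideanSpace ℂ (Fin n), ‖x‖ = 1 ∧
      r = ‖(inner ℂ ((Matrix.toEuclideanCLM (𝕜 := ℂ) A) x) x : ℂ)‖} := rfl
  have hub : ∀ r ∈ {r : ℝ | ∃ x : EuclideanSpace ℂ (Fin n), ‖x‖ = 1 ∧
      r = ‖(inner ℂ ((Matrix.toEuclideanCLM (𝕜 := ℂ) A) x) x : ℂ)‖}, r ≤ ρ / 2 := by
    rintro r ⟨x, hx, rfl⟩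
    have h1 := hkb A habsA x
    have h2 := hQub (fun i => ‖x i‖) (fun i => norm_nonneg _) (hxt x hx)
    refine h1.trans ?_
    refine le_trans (le_of_eq ?_) h2
    exact Finset.sum_congr rfl fun k _ => Finset.sum_congr rfl fun j _ => by ring
  have hbddA : BddAbove {r : ℝ | ∃ x : EuclideanSpace ℂ (Fin n), ‖x‖ = 1 ∧
      r = ‖(inner ℂ ((Matrix.toEuclideanCLM (𝕜 := ℂ) A) x) x : ℂ)‖} := ⟨ρ / 2, hub⟩
  constructor
  · -- part 1
    rw [numRadM, numRad, hnumA]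
    refine Real.sSup_le ?_ ?_
    · rintro r ⟨x, hx, rfl⟩
      have ht0 : ∀ i, (0:ℝ) ≤ ‖x i‖ := fun i => norm_nonneg _
      have hy1 : ‖cvec (fun i => ‖x i‖)‖ = 1 := by
        rw [norm_cvec, hxt x hx, Real.sqrt_one]
      have hmm := hmem (fun i => ‖x i‖) ht0
      have hle : ‖(inner ℂ ((Matrix.toEuclideanCLM (𝕜 := ℂ) S) x) x : ℂ)‖
          ≤ ‖(inner ℂ ((Matrix.toEuclideanCLM (𝕜 := ℂ) A) (cvec fun i => ‖x i‖))
              (cvec fun i => ‖x i‖) : ℂ)‖ := by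
        rw [hmm]
        exact hkb S (fun k j => rfl) x
      exact hle.trans (le_csSup hbddA ⟨cvec fun i => ‖x i‖, hy1, rfl⟩)
    · have hx0 : ‖(EuclideanSpace.single (0 : Fin n) (1:ℂ) : EuclideanSpace ℂ (Fin n))‖ = 1 := by
        rw [EuclideanSpace.norm_single, norm_one]
      exact le_trans (norm_nonneg _) (le_csSup hbddA ⟨_, hx0, rfl⟩)
  · -- part 2
    have hσle : numRadM A ≤ ρ / 2 := by
      rw [hnumA]
      exact Real.sSup_le hub (by positivity)
    have hσge : ρ / 2 ≤ numRadM A := by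
      obtain ⟨v, hv0, hvec⟩ := eigvec_of_spec (A + Aᵀ) μ0 hμ0mem
      have hN0 : (0:ℝ) < ∑ k, (‖v k‖)^2 := by
        obtain ⟨k, hk⟩ := Function.ne_iff.mp hv0
        have hk2 : v k ≠ 0 := hk
        refine Finset.sum_pos' (fun i _ => sq_nonneg _) ⟨k, Finset.mem_univ k, ?_⟩
        have := norm_pos_iff.mpr hk2
        positivity
      set N : ℝ := ∑ k, (‖v k‖)^2 with hNdef
      have hpt : ∀ k, ρ * ‖v k‖
          ≤ ∑ j, (‖S k j‖ + ‖S j k‖) * ‖v j‖ := by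
        intro k
        have h1 : ((A + Aᵀ).mulVec v) k = μ0 * v k := by
          rw [hvec]
          simp
        have h2 : ((A + Aᵀ).mulVec v) k
            = ∑ j, ((‖S k j‖ + ‖S j k‖ : ℝ) : ℂ) * v j := by
          rw [hBmat]
          simp [Matrix.mulVec, dotProduct]
        have h3 : ‖μ0 * v k‖ = ρ * ‖v k‖ := by
          rw [norm_mul, hμ0abs]
        calc ρ * ‖v k‖
            = ‖∑ j, ((‖S k j‖ + ‖S j k‖ : ℝ) : ℂ) * v j‖ := by
              rw [← h2, h1, h3]
          _ ≤ ∑ j, ‖((‖S k j‖ + ‖S j k‖ : ℝ) : ℂ) * v j‖ :=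
              norm_sum_le _ _
          _ = ∑ j, (‖S k j‖ + ‖S j k‖) * ‖v j‖ := by
              refine Finset.sum_congr rfl fun j _ => ?_
              rw [norm_mul, Complex.norm_real, Real.norm_eq_abs,
                abs_of_nonneg (add_nonneg (ha0 k j) (ha0 j k))]
      have hsum : ρ * N ≤ ∑ k, ∑ j,
          (‖S k j‖ + ‖S j k‖) * ‖v j‖ * ‖v k‖ := by
        calc ρ * N = ∑ k, (ρ * ‖v k‖) * ‖v k‖ := by
              rw [hNdef, Finset.mul_sum]
              exact Finset.sum_congr rfl fun k _ => by ring
          _ ≤ ∑ k, (∑ j, (‖S k j‖ + ‖S j k‖) * ‖v j‖)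
                * ‖v k‖ :=
              Finset.sum_le_sum fun k _ =>
                mul_le_mul_of_nonneg_right (hpt k) (norm_nonneg _)
          _ = _ := Finset.sum_congr rfl fun k _ => by rw [Finset.sum_mul]
      have hQN : ρ * N ≤ 2 * ∑ k, ∑ j,
          ‖S k j‖ * ‖v j‖ * ‖v k‖ := by
        rw [← hbb (fun i => ‖v i‖)]
        simpa using hsum
      set c := Real.sqrt N with hc
      have hc0 : (0:ℝ) < c := Real.sqrt_pos.mpr hN0
      have hcsq : c^2 = N := Real.sq_sqrt hN0.le
      have ht'0 : ∀ i, (0:ℝ) ≤ ‖v i‖ / c :=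
        fun i => div_nonneg (norm_nonneg _) hc0.le
      have ht'1 : ∑ i, (‖v i‖ / c)^2 = 1 := by
        simp only [div_pow]
        rw [← Finset.sum_div, hcsq, ← hNdef]
        exact div_self hN0.ne'
      have hQt' : ∑ k, ∑ j, ‖S k j‖ * (‖v j‖ / c) * (‖v k‖ / c)
          = (∑ k, ∑ j, ‖S k j‖ * ‖v j‖ * ‖v k‖) / N := by
        rw [Finset.sum_div]
        refine Finset.sum_congr rfl fun k _ => ?_
        rw [Finset.sum_div]
        refine Finset.sum_congr rfl fun j _ => ?_
        rw [← hcsq, eq_div_iff (pow_ne_zero 2 hc0.ne')]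
        field_simp
      have hge : ρ / 2 ≤ ∑ k, ∑ j,
          ‖S k j‖ * (‖v j‖ / c) * (‖v k‖ / c) := by
        rw [hQt', le_div_iff₀ hN0]
        linarith
      have hy1 : ‖cvec (fun i => ‖v i‖ / c)‖ = 1 := by
        rw [norm_cvec, ht'1, Real.sqrt_one]
      have hval := hmem (fun i => ‖v i‖ / c) ht'0
      have hfin : ρ / 2 ≤ ‖(inner ℂ ((Matrix.toEuclideanCLM (𝕜 := ℂ) A)
          (cvec fun i => ‖v i‖ / c)) (cvec fun i => ‖v i‖ / c) : ℂ)‖ := by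
        rw [hval]
        exact hge
      rw [hnumA]
      exact hfin.trans (le_csSup hbddA ⟨cvec fun i => ‖v i‖ / c, hy1, rfl⟩)
    rw [hspecρ]
    linarith
end

section
/- Mixed Schwarz inequality: for any bounded operator A on a Hilbert space and any α ∈ [0,1], |⟨Ax,y⟩|² ≤ ⟨|A|^{2α} x, x⟩ · ⟨|A*|^{2(1−α)} y, y⟩ for all vectors x, y. -/
open ContinuousLinearMap
open scoped NNReal

section Aux

variable {H : Type*} [NormedAddCommGroup H] [InnerProductSpace ℂ H] [CompleteSpace H]

private lemma msi_rpow_add_le {a b : ℝ} {p : ℝ} (ha : 0 ≤ a) (hb : 0 ≤ b)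
    (hp : 0 ≤ p) (hp1 : p ≤ 1) : (a + b) ^ p ≤ a ^ p + b ^ p := by
  have key := NNReal.rpow_add_le_add_rpow a.toNNReal b.toNNReal hp hp1
  have h1 : ((a.toNNReal + b.toNNReal : ℝ≥0) : ℝ) = a + b := by
    push_cast [Real.coe_toNNReal a ha, Real.coe_toNNReal b hb]; ring
  calc (a + b) ^ p = (((a.toNNReal + b.toNNReal : ℝ≥0) : ℝ)) ^ p := by rw [h1]
    _ = (((a.toNNReal + b.toNNReal) ^ p : ℝ≥0) : ℝ) := by
        rw [NNReal.coe_rpow]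
    _ ≤ ((a.toNNReal ^ p + b.toNNReal ^ p : ℝ≥0) : ℝ) := by exact_mod_cast key
    _ = a ^ p + b ^ p := by
        push_cast [NNReal.coe_rpow, Real.coe_toNNReal a ha, Real.coe_toNNReal b hb]; ring

private lemma msi_cont_shift (ε c : ℝ) (hε : 0 < ε) :
    Continuous fun t : ℝ => (max t 0 + ε) ^ c := by
  refine ((continuous_id.max continuous_const).add continuous_const).rpow_const fun t => ?_
  left
  have h1 : (0:ℝ) < max t 0 + ε := by positivity
  exact h1.ne'

/-- Intertwining: if `A * P = Q * A` with `P`, `Q` self-adjoint, then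
`A * f(P) = f(Q) * A` for every continuous `f`. -/
private lemma msi_cfc_intertwine [Nontrivial H] {A P Q : H →L[ℂ] H}
    (hP : IsSelfAdjoint P) (hQ : IsSelfAdjoint Q)
    (h : A * P = Q * A) {f : ℝ → ℝ} (hf : Continuous f) :
    A * cfc f P = cfc f Q * A := by
  have hpow : ∀ n : ℕ, A * P ^ n = Q ^ n * A := by
    intro n
    induction n with
    | zero => simp
    | succ n ih =>
        calc A * P ^ (n + 1) = A * P ^ n * P := by rw [pow_succ, mul_assoc]
          _ = Q ^ n * (A * P) := by rw [ih, mul_assoc]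
          _ = Q ^ n * Q * A := by rw [h, mul_assoc]
          _ = Q ^ (n + 1) * A := by rw [pow_succ]
  have hpoly : ∀ q : Polynomial ℝ, A * Polynomial.aeval P q = Polynomial.aeval Q q * A := by
    intro q
    induction q using Polynomial.induction_on with
    | C r => simpa using (Algebra.commutes r A).symm
    | add p q hp hq => simp only [map_add, mul_add, add_mul, hp, hq]
    | monomial n r _ =>
        simp only [map_mul, map_pow, Polynomial.aeval_C, Polynomial.aeval_X]
        calc A * (algebraMap ℝ (H →L[ℂ] H) r * P ^ (n + 1))
            = algebraMap ℝ (H →L[ℂ] H) r * (A * P ^ (n + 1)) := by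
              rw [← mul_assoc, ← Algebra.commutes r A, mul_assoc]
          _ = algebraMap ℝ (H →L[ℂ] H) r * Q ^ (n + 1) * A := by
              rw [hpow, mul_assoc]
  set D : H →L[ℂ] H := A * cfc f P - cfc f Q * A with hD
  have key : ∀ δ : ℝ, 0 < δ → ‖D‖ ≤ (2 * ‖A‖ + 1) * δ := by
    intro δ hδ
    set M : ℝ := max ‖P‖ ‖Q‖ with hM
    have hspecP : spectrum ℝ P ⊆ Set.Icc (-M) M := by
      intro t ht
      have h1 : ‖t‖ ≤ ‖P‖ := spectrum.norm_le_norm_of_mem ht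
      rw [Real.norm_eq_abs, abs_le] at h1
      exact ⟨by have := le_max_left ‖P‖ ‖Q‖; linarith [h1.1],
        by have := le_max_left ‖P‖ ‖Q‖; linarith [h1.2]⟩
    have hspecQ : spectrum ℝ Q ⊆ Set.Icc (-M) M := by
      intro t ht
      have h1 : ‖t‖ ≤ ‖Q‖ := spectrum.norm_le_norm_of_mem ht
      rw [Real.norm_eq_abs, abs_le] at h1
      exact ⟨by have := le_max_right ‖P‖ ‖Q‖; linarith [h1.1],
        by have := le_max_right ‖P‖ ‖Q‖; linarith [h1.2]⟩
    obtain ⟨p, hp⟩ := exists_polynomial_near_of_continuousOn (-M) M f hf.continuousOn δ hδ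
    have hPf : ‖cfc f P - Polynomial.aeval P p‖ ≤ δ := by
      rw [← cfc_polynomial p P hP,
        ← cfc_sub f _ P hf.continuousOn p.continuousOn]
      refine norm_cfc_le hδ.le fun t ht => ?_
      have h2 := hp t (hspecP ht)
      rw [Real.norm_eq_abs]
      rw [abs_sub_comm] at h2
      exact h2.le
    have hQf : ‖Polynomial.aeval Q p - cfc f Q‖ ≤ δ := by
      rw [← cfc_polynomial p Q hQ,
        ← cfc_sub _ f Q p.continuousOn hf.continuousOn]
      refine norm_cfc_le hδ.le fun t ht => ?_
      have h2 := hp t (hspecQ ht)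
      rw [Real.norm_eq_abs]
      exact h2.le
    have hD2 : D = A * (cfc f P - Polynomial.aeval P p)
        + (Polynomial.aeval Q p - cfc f Q) * A := by
      rw [hD, mul_sub, sub_mul, hpoly p]
      abel
    calc ‖D‖ ≤ ‖A * (cfc f P - Polynomial.aeval P p)‖
          + ‖(Polynomial.aeval Q p - cfc f Q) * A‖ := by rw [hD2]; exact norm_add_le _ _
      _ ≤ ‖A‖ * δ + δ * ‖A‖ := by
          refine add_le_add ((norm_mul_le _ _).trans ?_) ((norm_mul_le _ _).trans ?_)
          · exact mul_le_mul_of_nonneg_left hPf (norm_nonneg A)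
          · exact mul_le_mul_of_nonneg_right hQf (norm_nonneg A)
      _ ≤ (2 * ‖A‖ + 1) * δ := by nlinarith [norm_nonneg A]
  have h0 : D = 0 := by
    rw [← norm_le_zero_iff]
    by_contra hcon
    push_neg at hcon
    have hDpos : 0 < ‖D‖ := hcon
    have h1 := key (‖D‖ / (2 * (2 * ‖A‖ + 1))) (by positivity)
    have h2 : (0:ℝ) < 2 * ‖A‖ + 1 := by positivity
    have h3 : (2 * ‖A‖ + 1) * (‖D‖ / (2 * (2 * ‖A‖ + 1))) = ‖D‖ / 2 := by
      field_simp
    rw [h3] at h1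
    linarith
  have := sub_eq_zero.mp h0
  exact this

private lemma msi_sa_inner {u : H →L[ℂ] H} (hu : IsSelfAdjoint u) (a b : H) :
    (inner ℂ (u a) b : ℂ) = inner ℂ a (u b) := by
  have h1 : adjoint u = u := by rw [← star_eq_adjoint, hu.star_eq]
  calc (inner ℂ (u a) b : ℂ) = inner ℂ (adjoint u a) b := by rw [h1]
    _ = inner ℂ a (u b) := adjoint_inner_left u b a

private lemma msi_tendsto_aux {P : H →L[ℂ] H} (hP : IsSelfAdjoint P)
    (hsp : ∀ t ∈ spectrum ℝ P, 0 ≤ t) {β : ℝ} (hβ0 : 0 ≤ β) (hβ1 : β ≤ 1) (x : H) :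
    Filter.Tendsto (fun ε : ℝ => ((inner ℂ (cfc (fun t : ℝ => (max t 0 + ε) ^ β) P x) x : ℂ)).re)
      (nhdsWithin 0 (Set.Ioi 0))
      (nhds (((inner ℂ (cfc (fun t : ℝ => t ^ β) P x) x : ℂ)).re)) := by
  rcases eq_or_lt_of_le hβ0 with hβ | hβ
  · have h1 : ∀ ε : ℝ, cfc (fun t : ℝ => (max t 0 + ε) ^ β) P
        = cfc (fun t : ℝ => t ^ β) P := by
      intro ε
      rw [← hβ]
      simp only [Real.rpow_zero]
    simp only [h1]
    exact tendsto_const_nhds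
  · have hop : Filter.Tendsto (fun ε : ℝ => cfc (fun t : ℝ => (max t 0 + ε) ^ β) P)
        (nhdsWithin 0 (Set.Ioi 0)) (nhds (cfc (fun t : ℝ => t ^ β) P)) := by
      rw [tendsto_iff_norm_sub_tendsto_zero]
      refine squeeze_zero' (g := fun ε : ℝ => ε ^ β)
        (Filter.Eventually.of_forall fun _ => norm_nonneg _) ?_ ?_
      · filter_upwards [self_mem_nhdsWithin] with ε hε
        have hε' : (0:ℝ) < ε := hε
        rw [← cfc_sub _ _ P (msi_cont_shift ε β hε').continuousOn
          (Real.continuous_rpow_const hβ0).continuousOn]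
        refine norm_cfc_le (Real.rpow_nonneg hε'.le β) fun t ht => ?_
        have ht0 := hsp t ht
        rw [Real.norm_eq_abs, max_eq_left ht0]
        have h2 : t ^ β ≤ (t + ε) ^ β := Real.rpow_le_rpow ht0 (by linarith) hβ0
        rw [abs_of_nonneg (by linarith)]
        have h3 : (t + ε) ^ β ≤ t ^ β + ε ^ β := msi_rpow_add_le ht0 hε'.le hβ0 hβ1
        linarith
      · have h4 : Filter.Tendsto (fun ε : ℝ => ε ^ β) (nhds 0) (nhds ((0:ℝ) ^ β)) :=
          (Real.continuous_rpow_const hβ0).tendsto 0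
        rw [Real.zero_rpow hβ.ne'] at h4
        exact h4.mono_left nhdsWithin_le_nhds
    have hcont : Continuous fun B : H →L[ℂ] H => ((inner ℂ (B x) x : ℂ)).re :=
      Complex.continuous_re.comp
        (((ContinuousLinearMap.apply ℂ H x).continuous).inner continuous_const)
    exact ((hcont.tendsto _).comp hop)

end Aux

set_option maxHeartbeats 1000000 in
theorem mixed_schwarz_inequality
    {H : Type*} [NormedAddCommGroup H] [InnerProductSpace ℂ H] [CompleteSpace H]
    (A : H →L[ℂ] H) (α : ℝ) (hα : α ∈ Set.Icc (0 : ℝ) 1) (x y : H) :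
    ‖(inner ℂ (A x) y : ℂ)‖ ^ 2 ≤
      ((inner ℂ (cfc (fun t : ℝ => t ^ (2 * α)) (cfc Real.sqrt (adjoint A * A)) x) x : ℂ)).re *
      ((inner ℂ (cfc (fun t : ℝ => t ^ (2 * (1 - α))) (cfc Real.sqrt (A * adjoint A)) y) y : ℂ)).re := by
  obtain ⟨hα0, hα1⟩ := hα
  rcases subsingleton_or_nontrivial H with hsub | hnt
  · simp only [Subsingleton.elim x 0, Subsingleton.elim y 0, inner_zero_right, norm_zero,
      Complex.zero_re, mul_zero, zero_mul]
    norm_num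
  set P : H →L[ℂ] H := adjoint A * A with hPdef
  set Q : H →L[ℂ] H := A * adjoint A with hQdef
  have hPpos : (0 : H →L[ℂ] H) ≤ P := by
    rw [hPdef, ← star_eq_adjoint]
    exact star_mul_self_nonneg A
  have hQpos : (0 : H →L[ℂ] H) ≤ Q := by
    rw [hQdef, ← star_eq_adjoint]
    exact mul_star_self_nonneg A
  have hPsa : IsSelfAdjoint P := hPpos.isSelfAdjoint
  have hQsa : IsSelfAdjoint Q := hQpos.isSelfAdjoint
  have hspP : ∀ t ∈ spectrum ℝ P, 0 ≤ t := fun t ht => spectrum_nonneg_of_nonneg hPpos ht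
  have hspQ : ∀ t ∈ spectrum ℝ Q, 0 ≤ t := fun t ht => spectrum_nonneg_of_nonneg hQpos ht
  have hcomm : A * P = Q * A := by rw [hPdef, hQdef, ← mul_assoc]
  -- Rewrite the two operators in the goal as direct functions of `P` and `Q`.
  have hLHS1 : cfc (fun t : ℝ => t ^ (2 * α)) (cfc Real.sqrt P)
      = cfc (fun t : ℝ => t ^ α) P := by
    rw [← cfc_comp' (fun t : ℝ => t ^ (2 * α)) Real.sqrt P
      ((Real.continuous_rpow_const (by linarith)).continuousOn)
      Real.continuous_sqrt.continuousOn hPsa]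
    refine cfc_congr fun t ht => ?_
    have ht0 := hspP t ht
    rw [Real.sqrt_eq_rpow, ← Real.rpow_mul ht0]
    congr 1
    ring
  have hLHS2 : cfc (fun t : ℝ => t ^ (2 * (1 - α))) (cfc Real.sqrt Q)
      = cfc (fun t : ℝ => t ^ (1 - α)) Q := by
    rw [← cfc_comp' (fun t : ℝ => t ^ (2 * (1 - α))) Real.sqrt Q
      ((Real.continuous_rpow_const (by linarith)).continuousOn)
      Real.continuous_sqrt.continuousOn hQsa]
    refine cfc_congr fun t ht => ?_
    have ht0 := hspQ t ht
    rw [Real.sqrt_eq_rpow, ← Real.rpow_mul ht0]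
    congr 1
    ring
  rw [hLHS1, hLHS2]
  -- The key inequality for the regularized operators.
  have hkey : ∀ ε : ℝ, 0 < ε →
      ‖(inner ℂ (A x) y : ℂ)‖ ^ 2 ≤
        ((inner ℂ (cfc (fun t : ℝ => (max t 0 + ε) ^ α) P x) x : ℂ)).re *
        ((inner ℂ (cfc (fun t : ℝ => (max t 0 + ε) ^ (1 - α)) Q y) y : ℂ)).re := by
    intro ε hε
    have hbase : ∀ t : ℝ, (0:ℝ) < max t 0 + ε := fun t => by positivity
    set u : H →L[ℂ] H := cfc (fun t : ℝ => (max t 0 + ε) ^ (α / 2)) P with hu_def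
    set v : H →L[ℂ] H := cfc (fun t : ℝ => (max t 0 + ε) ^ (-(α / 2))) P with hv_def
    have hu : IsSelfAdjoint u := cfc_predicate _ P
    have hv : IsSelfAdjoint v := cfc_predicate _ P
    have hvu : v * u = 1 := by
      rw [hv_def, hu_def, ← cfc_mul _ _ P (msi_cont_shift ε _ hε).continuousOn
        (msi_cont_shift ε _ hε).continuousOn]
      have : cfc (fun t : ℝ => (max t 0 + ε) ^ (-(α / 2)) * (max t 0 + ε) ^ (α / 2)) P
          = cfc (fun _ : ℝ => (1:ℝ)) P := by
        refine cfc_congr fun t _ => ?_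
        rw [← Real.rpow_add (hbase t), show -(α / 2) + α / 2 = 0 by ring, Real.rpow_zero]
      rw [this]
      exact cfc_one ℝ P hPsa
    have huu : u * u = cfc (fun t : ℝ => (max t 0 + ε) ^ α) P := by
      rw [hu_def, ← cfc_mul _ _ P (msi_cont_shift ε _ hε).continuousOn
        (msi_cont_shift ε _ hε).continuousOn]
      refine cfc_congr fun t _ => ?_
      rw [← Real.rpow_add (hbase t), add_halves]
    have hvv : v * v = cfc (fun t : ℝ => (max t 0 + ε) ^ (-α)) P := by
      rw [hv_def, ← cfc_mul _ _ P (msi_cont_shift ε _ hε).continuousOn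
        (msi_cont_shift ε _ hε).continuousOn]
      refine cfc_congr fun t _ => ?_
      rw [← Real.rpow_add (hbase t), show -(α / 2) + -(α / 2) = -α by ring]
    -- splitting of the inner product
    have hsplit : (inner ℂ (A x) y : ℂ) = inner ℂ (u x) (v (adjoint A y)) := by
      calc (inner ℂ (A x) y : ℂ) = inner ℂ x (adjoint A y) := (adjoint_inner_right A x y).symm
        _ = inner ℂ ((v * u) x) (adjoint A y) := by rw [hvu, one_apply_eq_self]
        _ = inner ℂ (v (u x)) (adjoint A y) := by rw [mul_apply_eq_comp]
        _ = inner ℂ (u x) (v (adjoint A y)) := msi_sa_inner hv (u x) (adjoint A y)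
    -- first factor
    have hux : ((inner ℂ (cfc (fun t : ℝ => (max t 0 + ε) ^ α) P x) x : ℂ)).re = ‖u x‖ ^ 2 := by
      rw [← huu, mul_apply_eq_comp, msi_sa_inner hu (u x) x]
      exact inner_self_eq_norm_sq (𝕜 := ℂ) _
    -- second factor
    set w : H := adjoint A y with hw_def
    have hmulid : ∀ g : ℝ → ℝ, Continuous g →
        cfc g Q * Q = cfc (fun t : ℝ => g t * t) Q := by
      intro g hg
      nth_rewrite 2 [← cfc_id' ℝ Q hQsa]
      rw [← cfc_mul g (fun t : ℝ => t) Q hg.continuousOn continuous_id.continuousOn]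
    have hZdef : A * (v * v) * adjoint A
        = cfc (fun t : ℝ => (max t 0 + ε) ^ (-α) * t) Q := by
      rw [hvv, msi_cfc_intertwine hPsa hQsa hcomm (msi_cont_shift ε _ hε), mul_assoc, ← hQdef,
        hmulid _ (msi_cont_shift ε _ hε)]
    have hvy : ((inner ℂ ((cfc (fun t : ℝ => (max t 0 + ε) ^ (-α) * t) Q) y) y : ℂ)).re
        = ‖v w‖ ^ 2 := by
      rw [← hZdef]
      have happ : (A * (v * v) * adjoint A) y = A (v (v w)) := by
        rw [mul_apply_eq_comp, mul_apply_eq_comp, mul_apply_eq_comp, hw_def]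
      rw [happ, ← adjoint_inner_right A (v (v w)) y, ← hw_def, msi_sa_inner hv (v w) w]
      exact inner_self_eq_norm_sq (𝕜 := ℂ) _
    -- monotonicity step
    have hmono : ((inner ℂ ((cfc (fun t : ℝ => (max t 0 + ε) ^ (-α) * t) Q) y) y : ℂ)).re
        ≤ ((inner ℂ ((cfc (fun t : ℝ => (max t 0 + ε) ^ (1 - α)) Q) y) y : ℂ)).re := by
      have hle : cfc (fun t : ℝ => (max t 0 + ε) ^ (-α) * t) Q
          ≤ cfc (fun t : ℝ => (max t 0 + ε) ^ (1 - α)) Q := by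
        refine cfc_mono (fun t ht => ?_)
          (((msi_cont_shift ε _ hε).mul continuous_id).continuousOn)
          ((msi_cont_shift ε _ hε).continuousOn)
        have ht0 := hspQ t ht
        rw [max_eq_left ht0]
        have h1 : (0:ℝ) < t + ε := by linarith
        calc (t + ε) ^ (-α) * t ≤ (t + ε) ^ (-α) * (t + ε) :=
            mul_le_mul_of_nonneg_left (by linarith) (Real.rpow_nonneg h1.le _)
          _ = (t + ε) ^ (1 - α) := by
              nth_rewrite 2 [show t + ε = (t + ε) ^ (1:ℝ) from (Real.rpow_one _).symm]
              rw [← Real.rpow_add h1, show -α + 1 = 1 - α by ring]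
      have hpos := (ContinuousLinearMap.le_def _ _).mp hle
      have h2 := hpos.inner_nonneg_left y
      simp only [sub_apply, inner_sub_left, map_sub, RCLike.re_to_complex] at h2
      have h3 := (Complex.le_def.mp h2).1
      simp only [Complex.zero_re, Complex.sub_re] at h3
      linarith
    -- assemble
    calc ‖(inner ℂ (A x) y : ℂ)‖ ^ 2 = ‖(inner ℂ (u x) (v w) : ℂ)‖ ^ 2 := by
          rw [hsplit, hw_def]
      _ ≤ (‖u x‖ * ‖v w‖) ^ 2 := by
          have hcs := norm_inner_le_norm (𝕜 := ℂ) (u x) (v w)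
          exact pow_le_pow_left₀ (norm_nonneg _) hcs 2
      _ = ‖u x‖ ^ 2 * ‖v w‖ ^ 2 := mul_pow _ _ 2
      _ = ((inner ℂ (cfc (fun t : ℝ => (max t 0 + ε) ^ α) P x) x : ℂ)).re
            * ((inner ℂ ((cfc (fun t : ℝ => (max t 0 + ε) ^ (-α) * t) Q) y) y : ℂ)).re := by
          rw [hux, hvy]
      _ ≤ ((inner ℂ (cfc (fun t : ℝ => (max t 0 + ε) ^ α) P x) x : ℂ)).re
            * ((inner ℂ ((cfc (fun t : ℝ => (max t 0 + ε) ^ (1 - α)) Q) y) y : ℂ)).re := by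
          refine mul_le_mul_of_nonneg_left hmono ?_
          rw [hux]
          positivity
  -- pass to the limit ε → 0⁺
  have h1 := msi_tendsto_aux hPsa hspP hα0 hα1 x
  have h2 := msi_tendsto_aux hQsa hspQ (β := 1 - α) (by linarith) (by linarith) y
  refine ge_of_tendsto (h1.mul h2) ?_
  filter_upwards [self_mem_nhdsWithin] with ε hε
  exact hkey ε hε
end

section
/- Let A ∈ B(H) have Cartesian decomposition A = P + iQ with P, Q self-adjoint. If f, g are nonnegative continuous functions on [0,∞) with f(t)g(t) = t for all t ≥ 0, then |⟨Ax,y⟩| ≤ ‖f(|P|)x‖·‖g(|P|)y‖ + ‖f(|Q|)x‖·‖g(|Q|)y‖ for all x, y ∈ H. -/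
open ContinuousLinearMap in
lemma key_mixed_schwarz
    {H : Type*} [NormedAddCommGroup H] [InnerProductSpace ℂ H] [CompleteSpace H]
    (P : H →L[ℂ] H) (hP : IsSelfAdjoint P)
    (f g : ℝ → ℝ)
    (hf : ContinuousOn f (Set.Ici 0)) (hg : ContinuousOn g (Set.Ici 0))
    (hfg : ∀ t ∈ Set.Ici (0 : ℝ), f t * g t = t) (x y : H) :
    ‖(inner ℂ (P x) y : ℂ)‖ ≤
      ‖cfc f (cfc (fun t : ℝ => |t|) P) x‖ * ‖cfc g (cfc (fun t : ℝ => |t|) P) y‖ := by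
  have habs : ∀ t : ℝ, |t| ∈ Set.Ici (0 : ℝ) := fun t => abs_nonneg t
  have hF : Continuous (fun t : ℝ => f |t|) := hf.comp_continuous continuous_abs habs
  have hG : Continuous (fun t : ℝ => g |t|) := hg.comp_continuous continuous_abs habs
  have himg : ∀ (h : ℝ → ℝ), ContinuousOn h (Set.Ici 0) →
      ContinuousOn h ((fun t : ℝ => |t|) '' spectrum ℝ P) := fun h hh =>
    hh.mono (by rintro _ ⟨t, -, rfl⟩; exact abs_nonneg t)
  rw [← cfc_comp' f (fun t : ℝ => |t|) P (himg f hf) continuous_abs.continuousOn,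
      ← cfc_comp' g (fun t : ℝ => |t|) P (himg g hg) continuous_abs.continuousOn]
  set F : ℝ → ℝ := fun t => f |t| with hFdef
  set G : ℝ → ℝ := fun t => g |t| with hGdef
  have main : ∀ ε : ℝ, 0 < ε →
      ‖(inner ℂ (P x) y : ℂ)‖ ≤ ‖cfc F P x‖ * ‖cfc G P y‖ + ε * (‖x‖ * ‖y‖) := by
    intro ε hε
    set φ : ℝ → ℝ := fun t => t / max |t| ε with hφdef
    have hmaxpos : ∀ t : ℝ, 0 < max |t| ε := fun t => lt_max_of_lt_right hε
    have hφeval : ∀ t : ℝ, φ t = t / max |t| ε := fun _ => rfl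
    have hφcont : Continuous φ :=
      continuous_id.div (continuous_abs.max continuous_const) (fun t => (hmaxpos t).ne')
    have hφle : ∀ t : ℝ, |φ t| ≤ 1 := by
      intro t
      rw [hφeval, abs_div, abs_of_pos (hmaxpos t)]
      exact div_le_one_of_le₀ (le_max_left _ _) (hmaxpos t).le
    set T : H →L[ℂ] H := cfc G P * (cfc φ P * cfc F P) with hTdef
    have hT : T = cfc (fun t => G t * (φ t * F t)) P := by
      rw [cfc_mul G (fun t => φ t * F t) P hG.continuousOn ((hφcont.mul hF).continuousOn),
        cfc_mul _ _ P hφcont.continuousOn hF.continuousOn]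
    have hfun : (fun t => G t * (φ t * F t)) = fun t => φ t * |t| := by
      funext t
      have h1 : F t * G t = |t| := hfg |t| (habs t)
      calc G t * (φ t * F t) = φ t * (F t * G t) := by ring
        _ = φ t * |t| := by rw [h1]
    have hPT : ‖P - T‖ ≤ ε := by
      have heq : P - T = cfc (fun t : ℝ => t - φ t * |t|) P := by
        rw [hT, hfun,
          cfc_sub (fun t : ℝ => t) (fun t : ℝ => φ t * |t|) P
            continuous_id'.continuousOn ((hφcont.mul continuous_abs).continuousOn),
          cfc_id' ℝ P]
      rw [heq]
      refine norm_cfc_le hε.le fun t _ => ?_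
      show ‖t - φ t * |t|‖ ≤ ε
      rcases le_total ε |t| with h | h
      · have hm : max |t| ε = |t| := max_eq_left h
        have ht : t ≠ 0 := by
          intro h0; rw [h0] at h; simp at h; linarith
        have : φ t * |t| = t := by rw [hφeval, hm]; field_simp
        rw [this]; simpa using hε.le
      · have hm : max |t| ε = ε := max_eq_right h
        rw [hφeval, hm, Real.norm_eq_abs]
        have heq2 : t - t / ε * |t| = t * (ε - |t|) / ε := by field_simp
        have h0 : (0:ℝ) ≤ ε - |t| := by linarith
        rw [heq2, abs_div, abs_of_pos hε, div_le_iff₀ hε, abs_mul, abs_of_nonneg h0]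
        exact mul_le_mul h (by linarith [abs_nonneg t]) h0 hε.le
    have hGsa : IsSelfAdjoint (cfc G P) := cfc_predicate G P
    have h1 : ContinuousLinearMap.adjoint (cfc G P) = cfc G P :=
      ContinuousLinearMap.isSelfAdjoint_iff'.mp hGsa
    have hTinner : (inner ℂ (T x) y : ℂ) = inner ℂ (cfc φ P (cfc F P x)) (cfc G P y) := by
      rw [hTdef, ContinuousLinearMap.mul_apply, ContinuousLinearMap.mul_apply]
      conv_lhs => rw [← h1]
      exact ContinuousLinearMap.adjoint_inner_left _ _ _
    have hφnorm : ‖cfc φ P‖ ≤ 1 := by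
      refine norm_cfc_le zero_le_one fun t _ => ?_
      simpa [Real.norm_eq_abs] using hφle t
    have bound1 : ‖(inner ℂ ((P - T) x) y : ℂ)‖ ≤ ε * (‖x‖ * ‖y‖) :=
      calc ‖(inner ℂ ((P - T) x) y : ℂ)‖ ≤ ‖(P - T) x‖ * ‖y‖ := norm_inner_le_norm _ _
        _ ≤ (‖P - T‖ * ‖x‖) * ‖y‖ := by gcongr; exact (P - T).le_opNorm x
        _ ≤ ε * (‖x‖ * ‖y‖) := by rw [mul_assoc]; gcongr
    have bound2 : ‖(inner ℂ (T x) y : ℂ)‖ ≤ ‖cfc F P x‖ * ‖cfc G P y‖ := by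
      rw [hTinner]
      calc ‖(inner ℂ (cfc φ P (cfc F P x)) (cfc G P y) : ℂ)‖
          ≤ ‖cfc φ P (cfc F P x)‖ * ‖cfc G P y‖ := norm_inner_le_norm _ _
        _ ≤ (‖cfc φ P‖ * ‖cfc F P x‖) * ‖cfc G P y‖ := by
            gcongr; exact (cfc φ P).le_opNorm _
        _ ≤ ‖cfc F P x‖ * ‖cfc G P y‖ := by
            gcongr ?_ * _
            exact mul_le_of_le_one_left (norm_nonneg _) hφnorm
    calc ‖(inner ℂ (P x) y : ℂ)‖
        = ‖(inner ℂ ((P - T) x) y : ℂ) + inner ℂ (T x) y‖ := by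
          rw [ContinuousLinearMap.sub_apply, inner_sub_left]; ring_nf
      _ ≤ ‖(inner ℂ ((P - T) x) y : ℂ)‖ + ‖(inner ℂ (T x) y : ℂ)‖ := norm_add_le _ _
      _ ≤ ε * (‖x‖ * ‖y‖) + ‖cfc F P x‖ * ‖cfc G P y‖ := add_le_add bound1 bound2
      _ = ‖cfc F P x‖ * ‖cfc G P y‖ + ε * (‖x‖ * ‖y‖) := by ring
  refine le_of_forall_pos_le_add fun ε hε => ?_
  have hδ : 0 < ε / (‖x‖ * ‖y‖ + 1) := by positivity
  calc ‖(inner ℂ (P x) y : ℂ)‖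
      ≤ ‖cfc F P x‖ * ‖cfc G P y‖ + ε / (‖x‖ * ‖y‖ + 1) * (‖x‖ * ‖y‖) := main _ hδ
    _ ≤ ‖cfc F P x‖ * ‖cfc G P y‖ + ε := by
        gcongr _ + ?_
        rw [div_mul_eq_mul_div, div_le_iff₀ (by positivity)]
        nlinarith [mul_nonneg (norm_nonneg x) (norm_nonneg y)]

theorem cartesian_mixed_schwarz
    {H : Type*} [NormedAddCommGroup H] [InnerProductSpace ℂ H] [CompleteSpace H]
    (A P Q : H →L[ℂ] H) (hP : IsSelfAdjoint P) (hQ : IsSelfAdjoint Q)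
    (hA : A = P + Complex.I • Q)
    (f g : ℝ → ℝ)
    (hf : ContinuousOn f (Set.Ici 0)) (hg : ContinuousOn g (Set.Ici 0))
    (hf0 : ∀ t ∈ Set.Ici (0 : ℝ), 0 ≤ f t) (hg0 : ∀ t ∈ Set.Ici (0 : ℝ), 0 ≤ g t)
    (hfg : ∀ t ∈ Set.Ici (0 : ℝ), f t * g t = t) (x y : H) :
    ‖(inner ℂ (A x) y : ℂ)‖ ≤
      ‖cfc f (cfc (fun t : ℝ => |t|) P) x‖ * ‖cfc g (cfc (fun t : ℝ => |t|) P) y‖ +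
      ‖cfc f (cfc (fun t : ℝ => |t|) Q) x‖ * ‖cfc g (cfc (fun t : ℝ => |t|) Q) y‖ := by
  have hsplit : (inner ℂ (A x) y : ℂ) =
      inner ℂ (P x) y + (starRingEnd ℂ) Complex.I * inner ℂ (Q x) y := by
    rw [hA]
    simp [ContinuousLinearMap.add_apply, ContinuousLinearMap.smul_apply,
      inner_add_left, inner_smul_left, mul_comm]
  calc ‖(inner ℂ (A x) y : ℂ)‖
      ≤ ‖(inner ℂ (P x) y : ℂ)‖ + ‖(starRingEnd ℂ) Complex.I * (inner ℂ (Q x) y : ℂ)‖ := by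
        rw [hsplit]; exact norm_add_le _ _
    _ = ‖(inner ℂ (P x) y : ℂ)‖ + ‖(inner ℂ (Q x) y : ℂ)‖ := by
        rw [norm_mul, RCLike.norm_conj, Complex.norm_I, one_mul]
    _ ≤ _ := add_le_add
        (key_mixed_schwarz P hP f g hf hg hfg x y)
        (key_mixed_schwarz Q hQ f g hf hg hfg x y)
end

section
/- Every zero λ of p(z) = zⁿ + a_n z^{n−1} + ⋯ + a₁ lies in the rectangle [λ_min(Re C(p)), λ_max(Re C(p))] × [λ_min(Im C(p)), λ_max(Im C(p))], i.e., λ_min(Re C(p)) ≤ Re(λ) ≤ λ_max(Re C(p)) and λ_min(Im C(p)) ≤ Im(λ) ≤ λ_max(Im C(p)). -/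
open scoped Matrix

def companionMatrix {n : ℕ} (a : Fin n → ℂ) : Matrix (Fin n) (Fin n) ℂ :=
  Matrix.of fun i j =>
    if (i : ℕ) = 0 then -a j.rev
    else if (i : ℕ) = (j : ℕ) + 1 then 1
    else 0

open scoped ComplexConjugate

lemma rayleigh_bounds {n : ℕ} (hn : 0 < n) {A : Matrix (Fin n) (Fin n) ℂ}
    (hA : A.IsHermitian) (x : EuclideanSpace ℂ (Fin n)) (hx : ‖x‖ = 1) :
    (⨅ i, hA.eigenvalues i) ≤ (inner ℂ x (Matrix.toEuclideanLin A x) : ℂ).re ∧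
    (inner ℂ x (Matrix.toEuclideanLin A x) : ℂ).re ≤ ⨆ i, hA.eigenvalues i := by
  have : Nonempty (Fin n) := ⟨⟨0, hn⟩⟩
  set T := Matrix.toEuclideanLin A with hT
  have hsym : T.IsSymmetric := Matrix.isHermitian_iff_isSymmetric.1 hA
  set b := hA.eigenvectorBasis with hb
  have hTb : ∀ i, T (b i) = (hA.eigenvalues i : ℂ) • b i := by
    intro i
    have h1 : ⇑(T (b i)) = A *ᵥ ⇑(b i) := rfl
    have := hA.mulVec_eigenvectorBasis i
    apply (WithLp.equiv 2 (Fin n → ℂ)).injective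
    ext j
    have := congrFun (h1.trans this) j
    simpa [Complex.real_smul] using this
  set w : Fin n → ℂ := fun i => inner ℂ (b i) x with hw
  have key : (inner ℂ x (T x) : ℂ) = ∑ i, (hA.eigenvalues i : ℂ) * (Complex.normSq (w i)) := by
    rw [← b.sum_inner_mul_inner x (T x)]
    congr 1
    ext i
    have h2 : (inner ℂ (b i) (T x) : ℂ) = (hA.eigenvalues i : ℂ) * w i := by
      rw [← hsym (b i) x, hTb i, inner_smul_left]
      simp [hw, Complex.conj_ofReal]
    rw [h2]
    have h3 : (inner ℂ x (b i) : ℂ) = conj (w i) := by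
      rw [hw, ← inner_conj_symm]
    rw [h3, mul_comm ((starRingEnd ℂ) (w i)), mul_assoc, Complex.mul_conj]
  have hsum : ∑ i, (Complex.normSq (w i) : ℝ) = 1 := by
    have := b.sum_inner_mul_inner x x
    have h4 : (inner ℂ x x : ℂ) = 1 := by
      rw [inner_self_eq_norm_sq_to_K, hx]; norm_num
    rw [h4] at this
    have : ∑ i, (inner ℂ x (b i) * inner ℂ (b i) x : ℂ) = 1 := this
    have h5 : ∀ i, (inner ℂ x (b i) * inner ℂ (b i) x : ℂ) = (Complex.normSq (w i) : ℂ) := by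
      intro i
      rw [show (inner ℂ x (b i) : ℂ) = conj (w i) from by rw [hw, ← inner_conj_symm]]
      rw [mul_comm, Complex.mul_conj]
    rw [Finset.sum_congr rfl (fun i _ => h5 i)] at this
    exact_mod_cast this
  have hre : (inner ℂ x (T x) : ℂ).re = ∑ i, hA.eigenvalues i * Complex.normSq (w i) := by
    rw [key, Complex.re_sum]
    congr 1; ext i; simp
  rw [hre]
  have hbddA : BddAbove (Set.range hA.eigenvalues) := Set.Finite.bddAbove (Set.finite_range _)
  have hbddB : BddBelow (Set.range hA.eigenvalues) := Set.Finite.bddBelow (Set.finite_range _)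
  constructor
  · calc (⨅ i, hA.eigenvalues i) = ∑ i, (⨅ j, hA.eigenvalues j) * Complex.normSq (w i) := by
          rw [← Finset.mul_sum, hsum, mul_one]
      _ ≤ ∑ i, hA.eigenvalues i * Complex.normSq (w i) :=
          Finset.sum_le_sum fun i _ => by
            exact mul_le_mul_of_nonneg_right (ciInf_le hbddB i) (Complex.normSq_nonneg _)
  · calc ∑ i, hA.eigenvalues i * Complex.normSq (w i)
        ≤ ∑ i, (⨆ j, hA.eigenvalues j) * Complex.normSq (w i) :=
          Finset.sum_le_sum fun i _ => by
            exact mul_le_mul_of_nonneg_right (le_ciSup hbddA i) (Complex.normSq_nonneg _)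
      _ = ⨆ j, hA.eigenvalues j := by rw [← Finset.mul_sum, hsum, mul_one]


theorem zeros_in_rectangle {n : ℕ} (hn : 0 < n) (a : Fin n → ℂ)
    (hRe : ((1 / 2 : ℂ) • (companionMatrix a + (companionMatrix a)ᴴ)).IsHermitian)
    (hIm : ((-(Complex.I) / 2) • (companionMatrix a - (companionMatrix a)ᴴ)).IsHermitian)
    (lam : ℂ) (hroot : lam ^ n + ∑ i : Fin n, a i * lam ^ (i : ℕ) = 0) :
    ((⨅ i, hRe.eigenvalues i) ≤ lam.re ∧ lam.re ≤ ⨆ i, hRe.eigenvalues i) ∧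
    ((⨅ i, hIm.eigenvalues i) ≤ lam.im ∧ lam.im ≤ ⨆ i, hIm.eigenvalues i) := by
  set C := companionMatrix a with hC
  set v : Fin n → ℂ := fun i => lam ^ ((Fin.rev i : Fin n) : ℕ) with hv
  have hmul : C *ᵥ v = lam • v := by
    funext i
    by_cases hi : (i : ℕ) = 0
    · have hrow : (C *ᵥ v) i = ∑ j, -a j.rev * v j := by
        simp [hC, companionMatrix, Matrix.mulVec, dotProduct, hi]
      have hre : ∑ j, -a j.rev * v j = -∑ k, a k * lam ^ (k : ℕ) := by
        rw [← Finset.sum_neg_distrib]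
        exact Fintype.sum_equiv (Equiv.mk Fin.rev Fin.rev Fin.rev_rev Fin.rev_rev)
          _ _ (fun j => by simp [hv])
      have hln : -∑ k, a k * lam ^ (k : ℕ) = lam ^ n := by
        have := hroot; linear_combination -this
      have hrhs : (lam • v) i = lam ^ n := by
        have : ((Fin.rev i : Fin n) : ℕ) = n - 1 := by
          rw [Fin.val_rev]; omega
        simp only [Pi.smul_apply, hv, smul_eq_mul, this]
        rw [← pow_succ']
        congr 1; omega
      rw [hrow, hre, hln, hrhs]
    · have hi1 : 1 ≤ (i : ℕ) := Nat.one_le_iff_ne_zero.2 hi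
      have hilt : (i : ℕ) < n := i.isLt
      set k : Fin n := ⟨(i : ℕ) - 1, by omega⟩ with hk
      have hrow : (C *ᵥ v) i = v k := by
        simp only [hC, companionMatrix, Matrix.mulVec, dotProduct, Matrix.of_apply, hi,
          if_false]
        rw [Finset.sum_eq_single k]
        · simp [hk]; omega
        · intro j _ hj
          have : ¬ ((i : ℕ) = (j : ℕ) + 1) := by
            intro h
            apply hj
            apply Fin.ext
            simp [hk]; omega
          simp [this]
        · intro h; exact absurd (Finset.mem_univ k) h
      rw [hrow]
      have h1 : ((Fin.rev k : Fin n) : ℕ) = n - (i : ℕ) := by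
        rw [Fin.val_rev]; simp [hk]; omega
      have h2 : ((Fin.rev i : Fin n) : ℕ) = n - 1 - (i : ℕ) := by
        rw [Fin.val_rev]; omega
      simp only [hv, Pi.smul_apply, smul_eq_mul, h1, h2]
      rw [← pow_succ']
      congr 1; omega
  set ve : EuclideanSpace ℂ (Fin n) := (WithLp.equiv 2 (Fin n → ℂ)).symm v with hve
  have hvne : ve ≠ 0 := by
    intro h
    have : v ⟨n - 1, by omega⟩ = 0 := by
      have := congrFun (congrArg (WithLp.equiv 2 (Fin n → ℂ)) h) ⟨n - 1, by omega⟩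
      simpa [hve] using this
    rw [hv] at this
    simp only [Fin.val_rev] at this
    rw [show n - ((n - 1 : ℕ) + 1) = 0 from by omega] at this
    simp at this
  set u : EuclideanSpace ℂ (Fin n) := ((‖ve‖ : ℂ))⁻¹ • ve with hu'
  have hnorm : ‖u‖ = 1 := by
    rw [hu', norm_smul]
    simp [norm_ne_zero_iff.2 hvne, inv_mul_cancel₀ (norm_ne_zero_iff.2 hvne)]
  have hCve : Matrix.toEuclideanLin C ve = lam • ve := by
    rw [hve, WithLp.equiv_symm_apply, Matrix.toEuclideanLin_apply_piLp_toLp, hmul]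
    rfl
  have hCu : Matrix.toEuclideanLin C u = lam • u := by
    rw [hu', map_smul, hCve, smul_comm]
  have hinner : (inner ℂ u (Matrix.toEuclideanLin C u) : ℂ) = lam := by
    rw [hCu, inner_smul_right, inner_self_eq_norm_sq_to_K, hnorm]
    norm_num
  have hinnerT : (inner ℂ u (Matrix.toEuclideanLin Cᴴ u) : ℂ) = conj lam := by
    rw [Matrix.toEuclideanLin_conjTranspose_eq_adjoint, LinearMap.adjoint_inner_right, hCu,
      inner_smul_left, inner_self_eq_norm_sq_to_K, hnorm]
    norm_num
  constructor
  · have hsplit : Matrix.toEuclideanLin ((1 / 2 : ℂ) • (C + Cᴴ)) u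
        = (1 / 2 : ℂ) • (Matrix.toEuclideanLin C u + Matrix.toEuclideanLin Cᴴ u) := by
      simp only [map_smul, map_add, LinearMap.smul_apply, LinearMap.add_apply]
    have hP : (inner ℂ u (Matrix.toEuclideanLin ((1 / 2 : ℂ) • (C + Cᴴ)) u) : ℂ).re = lam.re := by
      rw [hsplit, inner_smul_right, inner_add_right, hinner, hinnerT, Complex.add_conj]
      simp
    have := rayleigh_bounds hn hRe u hnorm
    rw [hP] at this
    exact this
  · have hsplit : Matrix.toEuclideanLin ((-(Complex.I) / 2) • (C - Cᴴ)) u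
        = (-(Complex.I) / 2 : ℂ) • (Matrix.toEuclideanLin C u - Matrix.toEuclideanLin Cᴴ u) := by
      simp only [map_smul, map_sub, LinearMap.smul_apply, LinearMap.sub_apply]
    have hQ : (inner ℂ u (Matrix.toEuclideanLin ((-(Complex.I) / 2) • (C - Cᴴ)) u) : ℂ).re
        = lam.im := by
      rw [hsplit, inner_smul_right, inner_sub_right, hinner, hinnerT, Complex.sub_conj]
      have : (-(Complex.I) / 2 : ℂ) * (((2 * lam.im : ℝ) : ℂ) * Complex.I) = (lam.im : ℂ) := by
        push_cast
        have h := Complex.I_mul_I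
        ring_nf
        rw [Complex.I_sq]
        ring
      rw [this]
      simp
    have := rayleigh_bounds hn hIm u hnorm
    rw [hQ] at this
    exact this
end
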